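/- Let Ψ : ℝ⁴ → ℂ⁴ be a Dirac solution for the 4-potential a = (a₀,a₁,a₂,a₃) and mass κ. Then at every point of ℝ⁴ the following identity holds: 2i·a₁·(Ψ*δ₄Ψ) = −2κ·(Ψ*γ₁γ₄Ψ) + ∂₁↔(Ψ*δ₄Ψ) − ∂₂(Ψ*δ₃Ψ) + ∂₃(Ψ*δ₂Ψ) + i·∂₀(Ψ*δ₁Ψ). -/

import Mathlib

set_option maxHeartbeats 1000000
set_option maxRecDepth 10000

noncomputable section

open Complex Matrix MeasureTheory

/-- The Dirac matrix γ₁ in the standard representation. -/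
def γ1 : Matrix (Fin 4) (Fin 4) ℂ := !![0,0,0,-I; 0,0,-I,0; 0,I,0,0; I,0,0,0]
/-- The Dirac matrix γ₂ in the standard representation. -/
def γ2 : Matrix (Fin 4) (Fin 4) ℂ := !![0,0,0,-1; 0,0,1,0; 0,1,0,0; -1,0,0,0]
/-- The Dirac matrix γ₃ in the standard representation. -/
def γ3 : Matrix (Fin 4) (Fin 4) ℂ := !![0,0,-I,0; 0,0,0,I; I,0,0,0; 0,-I,0,0]
/-- The Dirac matrix γ₄ in the standard representation. -/
def γ4 : Matrix (Fin 4) (Fin 4) ℂ := !![1,0,0,0; 0,1,0,0; 0,0,-1,0; 0,0,0,-1]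
/-- γ₅ = γ₁γ₂γ₃γ₄. -/
def γ5 : Matrix (Fin 4) (Fin 4) ℂ := γ1 * γ2 * γ3 * γ4
/-- δ₁ = γ₁ + γ₅γ₁. -/
def δ1 : Matrix (Fin 4) (Fin 4) ℂ := γ1 + γ5 * γ1
/-- δ₂ = γ₂ + γ₅γ₂. -/
def δ2 : Matrix (Fin 4) (Fin 4) ℂ := γ2 + γ5 * γ2
/-- δ₃ = γ₃ + γ₅γ₃. -/
def δ3 : Matrix (Fin 4) (Fin 4) ℂ := γ3 + γ5 * γ3
/-- δ₄ = γ₄ + γ₅γ₄. -/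
def δ4 : Matrix (Fin 4) (Fin 4) ℂ := γ4 + γ5 * γ4

/-- The sesquilinear form v* M v (v a column vector, v* its conjugate transpose). -/
def qc (M : Matrix (Fin 4) (Fin 4) ℂ) (v : Fin 4 → ℂ) : ℂ := star v ⬝ᵥ M.mulVec v
/-- The bilinear form vᵀ M v (v a column vector, vᵀ its transpose). -/
def qt (M : Matrix (Fin 4) (Fin 4) ℂ) (v : Fin 4 → ℂ) : ℂ := v ⬝ᵥ M.mulVec v

/-- The partial derivative ∂_μ of a spinor field on ℝ⁴. -/
def pd (μ : Fin 4) (Ψ : (Fin 4 → ℝ) → Fin 4 → ℂ) (x : Fin 4 → ℝ) : Fin 4 → ℂ :=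
  fderiv ℝ Ψ x (Pi.single μ 1)

/-- The partial derivative ∂_μ of a complex scalar field on ℝ⁴. -/
def pds (μ : Fin 4) (g : (Fin 4 → ℝ) → ℂ) (x : Fin 4 → ℝ) : ℂ :=
  fderiv ℝ g x (Pi.single μ 1)

/-- The bidirectional derivative ∂_μ↔(Ψ* M Ψ) := Ψ* M (∂_μΨ) − (∂_μΨ)* M Ψ. -/
def bd (μ : Fin 4) (M : Matrix (Fin 4) (Fin 4) ℂ) (Ψ : (Fin 4 → ℝ) → Fin 4 → ℂ)
    (x : Fin 4 → ℝ) : ℂ :=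
  star (Ψ x) ⬝ᵥ M.mulVec (pd μ Ψ x) - star (pd μ Ψ x) ⬝ᵥ M.mulVec (Ψ x)

/-- Ψ is a Dirac solution for the 4-potential (a₀,a₁,a₂,a₃) and mass κ:
Ψ is differentiable and Σ_{μ=1}^{3} γ_μ(∂_μΨ − i a_μΨ) − i γ₄(∂₀Ψ + i a₀Ψ) + κΨ = 0 on ℝ⁴. -/
def DiracSolution (Ψ : (Fin 4 → ℝ) → Fin 4 → ℂ)
    (a0 a1 a2 a3 : (Fin 4 → ℝ) → ℝ) (κ : ℝ) : Prop :=
  Differentiable ℝ Ψ ∧ ∀ x : Fin 4 → ℝ,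
    γ1.mulVec (pd 1 Ψ x - (I * (a1 x : ℂ)) • Ψ x)
      + γ2.mulVec (pd 2 Ψ x - (I * (a2 x : ℂ)) • Ψ x)
      + γ3.mulVec (pd 3 Ψ x - (I * (a3 x : ℂ)) • Ψ x)
      - I • γ4.mulVec (pd 0 Ψ x + (I * (a0 x : ℂ)) • Ψ x)
      + (κ : ℂ) • Ψ x = 0

lemma pds_qc {Ψ : (Fin 4 → ℝ) → Fin 4 → ℂ} (hΨ : Differentiable ℝ Ψ)
    (M : Matrix (Fin 4) (Fin 4) ℂ) (μ : Fin 4) (x : Fin 4 → ℝ) :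
    pds μ (fun y => qc M (Ψ y)) x
      = star (pd μ Ψ x) ⬝ᵥ M.mulVec (Ψ x) + star (Ψ x) ⬝ᵥ M.mulVec (pd μ Ψ x) := by
  have hd : ∀ i : Fin 4, HasFDerivAt (fun y => Ψ y i)
      ((ContinuousLinearMap.proj i).comp (fderiv ℝ Ψ x)) x := fun i =>
    (ContinuousLinearMap.proj i : (Fin 4 → ℂ) →L[ℝ] ℂ).hasFDerivAt.comp x (hΨ x).hasFDerivAt
  have hfun : (fun y => qc M (Ψ y))
      = fun y => ∑ i : Fin 4, ∑ j : Fin 4, (starRingEnd ℂ) (Ψ y i) * (M i j * Ψ y j) := by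
    funext y
    simp only [qc, dotProduct, mulVec, Pi.star_apply, Complex.star_def, Finset.mul_sum]
  have key : HasFDerivAt (fun y => ∑ i : Fin 4, ∑ j : Fin 4, (starRingEnd ℂ) (Ψ y i) * (M i j * Ψ y j))
      (∑ i : Fin 4, ∑ j : Fin 4,
        ((starRingEnd ℂ) (Ψ x i) • (M i j • ((ContinuousLinearMap.proj j).comp (fderiv ℝ Ψ x)))
          + (M i j * Ψ x j) •
            ((Complex.conjCLE.toContinuousLinearMap).comp
              ((ContinuousLinearMap.proj i).comp (fderiv ℝ Ψ x))))) x := by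
    apply HasFDerivAt.fun_sum; intro i _
    apply HasFDerivAt.fun_sum; intro j _
    have hci : HasFDerivAt (fun y => (starRingEnd ℂ) (Ψ y i))
        ((Complex.conjCLE.toContinuousLinearMap).comp
          ((ContinuousLinearMap.proj i).comp (fderiv ℝ Ψ x))) x :=
      (Complex.conjCLE.toContinuousLinearMap.hasFDerivAt).comp x (hd i)
    exact hci.mul ((hd j).const_mul (M i j))
  rw [hfun, pds, key.fderiv]
  simp only [ContinuousLinearMap.sum_apply, ContinuousLinearMap.add_apply,
    ContinuousLinearMap.smul_apply, ContinuousLinearMap.comp_apply,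
    ContinuousLinearMap.proj_apply, ContinuousLinearEquiv.coe_coe,
    Complex.conjCLE_apply, smul_eq_mul, dotProduct, mulVec, Pi.star_apply,
    Complex.star_def, Finset.mul_sum, pd]
  rw [← Finset.sum_add_distrib]
  apply Finset.sum_congr rfl; intro i _
  rw [← Finset.sum_add_distrib]
  apply Finset.sum_congr rfl; intro j _
  ring

lemma hδ1 : δ1 = !![0,-I,0,-I; -I,0,-I,0; 0,I,0,I; I,0,I,0] := by
  ext i j
  fin_cases i <;> fin_cases j <;>
    simp [δ1, γ5, γ1, γ2, γ3, γ4, Matrix.mul_apply, Fin.sum_univ_four, Matrix.vecHead, Matrix.vecTail]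

lemma hδ2 : δ2 = !![0,-1,0,-1; 1,0,1,0; 0,1,0,1; -1,0,-1,0] := by
  ext i j
  fin_cases i <;> fin_cases j <;>
    simp [δ2, γ5, γ1, γ2, γ3, γ4, Matrix.mul_apply, Fin.sum_univ_four, Matrix.vecHead, Matrix.vecTail]

lemma hδ3 : δ3 = !![-I,0,-I,0; 0,I,0,I; I,0,I,0; 0,-I,0,-I] := by
  ext i j
  fin_cases i <;> fin_cases j <;>
    simp [δ3, γ5, γ1, γ2, γ3, γ4, Matrix.mul_apply, Fin.sum_univ_four, Matrix.vecHead, Matrix.vecTail]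

lemma hδ4 : δ4 = !![1,0,1,0; 0,1,0,1; -1,0,-1,0; 0,-1,0,-1] := by
  ext i j
  fin_cases i <;> fin_cases j <;>
    simp [δ4, γ5, γ1, γ2, γ3, γ4, Matrix.mul_apply, Fin.sum_univ_four, Matrix.vecHead, Matrix.vecTail]

lemma hγ14 : γ1 * γ4 = !![0,0,0,I; 0,0,I,0; 0,I,0,0; I,0,0,0] := by
  ext i j
  fin_cases i <;> fin_cases j <;>
    simp [γ1, γ4, Matrix.mul_apply, Fin.sum_univ_four, Matrix.vecHead, Matrix.vecTail]

/-- for a Dirac solution Ψ,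
2i·a₁·(Ψ*δ₄Ψ) = −2κ·(Ψ*γ₁γ₄Ψ) + ∂₁↔(Ψ*δ₄Ψ) − ∂₂(Ψ*δ₃Ψ) + ∂₃(Ψ*δ₂Ψ) + i·∂₀(Ψ*δ₁Ψ)
everywhere. -/
theorem identity_a1
    (Ψ : (Fin 4 → ℝ) → Fin 4 → ℂ)
    (a0 a1 a2 a3 : (Fin 4 → ℝ) → ℝ) (κ : ℝ)
    (hΨ : DiracSolution Ψ a0 a1 a2 a3 κ) :
    ∀ x : Fin 4 → ℝ,
      2 * I * (a1 x : ℂ) * qc δ4 (Ψ x)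
        = -2 * (κ : ℂ) * qc (γ1 * γ4) (Ψ x)
            + bd 1 δ4 Ψ x
            - pds 2 (fun y => qc δ3 (Ψ y)) x
            + pds 3 (fun y => qc δ2 (Ψ y)) x
            + I * pds 0 (fun y => qc δ1 (Ψ y)) x := by
  obtain ⟨hdiff, heq⟩ := hΨ
  intro x
  rw [pds_qc hdiff δ3 2 x, pds_qc hdiff δ2 3 x, pds_qc hdiff δ1 0 x]
  have h := heq x
  have h0 := congrFun h 0
  have h1 := congrFun h 1
  have h2 := congrFun h 2
  have h3 := congrFun h 3
  simp only [Pi.add_apply, Pi.sub_apply, Pi.smul_apply, Pi.zero_apply, smul_eq_mul,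
    mulVec, dotProduct, Fin.sum_univ_four, γ1, γ2, γ3, γ4,
    Fin.isValue, Matrix.of_apply, Nat.succ_eq_add_one, Nat.reduceAdd,
    Matrix.cons_val', Matrix.cons_val_zero, Matrix.cons_val_one, Matrix.head_cons,
    Matrix.empty_val', Matrix.cons_val_fin_one, Matrix.head_fin_const,
    Matrix.cons_val_two, Matrix.cons_val_three, Matrix.tail_cons]
    at h0 h1 h2 h3
  have hc0 := congrArg (starRingEnd ℂ) h0
  have hc1 := congrArg (starRingEnd ℂ) h1
  have hc2 := congrArg (starRingEnd ℂ) h2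
  have hc3 := congrArg (starRingEnd ℂ) h3
  simp only [map_add, map_sub, _root_.map_mul, map_zero, Complex.conj_I, Complex.conj_ofReal,
    _root_.map_one, map_neg] at hc0 hc1 hc2 hc3
  simp only [qc, bd, hδ1, hδ2, hδ3, hδ4, hγ14, mulVec, dotProduct, Fin.sum_univ_four,
    Pi.star_apply, Complex.star_def,
    Fin.isValue, Matrix.of_apply, Nat.succ_eq_add_one, Nat.reduceAdd,
    Matrix.cons_val', Matrix.cons_val_zero, Matrix.cons_val_one, Matrix.head_cons,
    Matrix.empty_val', Matrix.cons_val_fin_one, Matrix.head_fin_const,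
    Matrix.cons_val_two, Matrix.cons_val_three, Matrix.tail_cons]
  linear_combination
    (I * (starRingEnd ℂ) (Ψ x 3) - I * (starRingEnd ℂ) (Ψ x 1)) * h0
      + (I * (starRingEnd ℂ) (Ψ x 2) - I * (starRingEnd ℂ) (Ψ x 0)) * h1
      + (I * (starRingEnd ℂ) (Ψ x 1) - I * (starRingEnd ℂ) (Ψ x 3)) * h2
      + (I * (starRingEnd ℂ) (Ψ x 0) - I * (starRingEnd ℂ) (Ψ x 2)) * h3
      + (I * Ψ x 1 + I * Ψ x 3) * hc0
      + (I * Ψ x 0 + I * Ψ x 2) * hc1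
      + (I * Ψ x 1 + I * Ψ x 3) * hc2
      + (I * Ψ x 0 + I * Ψ x 2) * hc3
      + ((2*I*((a1 x :ℝ):ℂ)*(starRingEnd ℂ) (Ψ x 0)*Ψ x 0) + (2*I*((a1 x :ℝ):ℂ)*(starRingEnd ℂ) (Ψ x 0)*Ψ x 2) + (2*I*((a1 x :ℝ):ℂ)*(starRingEnd ℂ) (Ψ x 1)*Ψ x 1) + (2*I*((a1 x :ℝ):ℂ)*(starRingEnd ℂ) (Ψ x 1)*Ψ x 3) + (-2*I*((a1 x :ℝ):ℂ)*(starRingEnd ℂ) (Ψ x 2)*Ψ x 0) + (-2*I*((a1 x :ℝ):ℂ)*(starRingEnd ℂ) (Ψ x 2)*Ψ x 2) + (-2*I*((a1 x :ℝ):ℂ)*(starRingEnd ℂ) (Ψ x 3)*Ψ x 1) + (-2*I*((a1 x :ℝ):ℂ)*(starRingEnd ℂ) (Ψ x 3)*Ψ x 3) + (1*(starRingEnd ℂ) (pd 1 Ψ x 0)*Ψ x 0) + (1*(starRingEnd ℂ) (pd 1 Ψ x 0)*Ψ x 2) + (1*(starRingEnd ℂ) (pd 1 Ψ x 1)*Ψ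 x 1) + (1*(starRingEnd ℂ) (pd 1 Ψ x 1)*Ψ x 3) + (-1*(starRingEnd ℂ) (pd 1 Ψ x 2)*Ψ x 0) + (-1*(starRingEnd ℂ) (pd 1 Ψ x 2)*Ψ x 2) + (-1*(starRingEnd ℂ) (pd 1 Ψ x 3)*Ψ x 1) + (-1*(starRingEnd ℂ) (pd 1 Ψ x 3)*Ψ x 3) + (1*(starRingEnd ℂ) (pd 3 Ψ x 0)*Ψ x 1) + (1*(starRingEnd ℂ) (pd 3 Ψ x 0)*Ψ x 3) + (-1*(starRingEnd ℂ) (pd 3 Ψ x 1)*Ψ x 0) + (-1*(starRingEnd ℂ) (pd 3 Ψ x 1)*Ψ x 2) + (-1*(starRingEnd ℂ) (pd 3 Ψ x 2)*Ψ x 1) + (-1*(starRingEnd ℂ) (pd 3 Ψ x 2)*Ψ x 3) + (1*(starRingEnd ℂ) (pd 3 Ψ x 3)*Ψ x 0) + (1*(starRingEnd ℂ) (pd 3 Ψ x 3)*Ψ x 2) + (-1*(starRingEnd ℂ) (Ψ x 0)*pd 1 Ψ x 0) + (-1*(starRingEnd ℂ) (Ψ x 0)*pd 1 Ψ x 2)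 + (1*(starRingEnd ℂ) (Ψ x 0)*pd 3 Ψ x 1) + (1*(starRingEnd ℂ) (Ψ x 0)*pd 3 Ψ x 3) + (-1*(starRingEnd ℂ) (Ψ x 1)*pd 1 Ψ x 1) + (-1*(starRingEnd ℂ) (Ψ x 1)*pd 1 Ψ x 3) + (-1*(starRingEnd ℂ) (Ψ x 1)*pd 3 Ψ x 0) + (-1*(starRingEnd ℂ) (Ψ x 1)*pd 3 Ψ x 2) + (1*(starRingEnd ℂ) (Ψ x 2)*pd 1 Ψ x 0) + (1*(starRingEnd ℂ) (Ψ x 2)*pd 1 Ψ x 2) + (-1*(starRingEnd ℂ) (Ψ x 2)*pd 3 Ψ x 1) + (-1*(starRingEnd ℂ) (Ψ x 2)*pd 3 Ψ x 3) + (1*(starRingEnd ℂ) (Ψ x 3)*pd 1 Ψ x 1) + (1*(starRingEnd ℂ) (Ψ x 3)*pd 1 Ψ x 3) + (1*(starRingEnd ℂ) (Ψ x 3)*pd 3 Ψ x 0) + (1*(starRingEnd ℂ) (Ψ x 3)*pd 3 Ψ x 2)) * Complex.I_sq
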